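/- For r ≥ 1, the identity 1 + (1 + s₁ + s₂s₁ + ⋯ + s_{r-1}⋯s₂s₁) ⋄ (1/(u - x₁)) = ∏_{i=1}^{r} (u+1-x_i)/(u-x_i) holds, where ⋄ denotes the deformed action of the symmetric group S_r on rational functions given on generators by s_i ⋄ f = s_i(f) + (f - s_i(f))/(x_i - x_{i+1}). -/

import Mathlib

open MvPolynomial

/-- For `r ≥ 1`, the identity
`1 + (1 + s₁ + s₂s₁ + ⋯ + s_{r-1}⋯s₂s₁) ⋄ (1/(u - x₁)) = ∏_{i=1}^r (u+1-x_i)/(u-x_i)`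
holds in the field of rational functions `K = Frac(ℚ[x₀, x₁, x₂, …])`, where `x₀` plays the
role of `u`, the deformed action on `K` is `σᵢ g = τᵢ g + (g - τᵢ g)/(xᵢ - x_{i+1})` with
`τᵢ` the field automorphism swapping `xᵢ` and `x_{i+1}`, and `W j = (s_j ⋯ s₁) ⋄ (1/(u - x₁))`
is defined recursively by `W 0 = 1/(u - x₁)`, `W j = σ_j (W (j-1))`. -/
theorem deformed_action_telescoping (r : ℕ) (hr : 1 ≤ r)
    (K : Type*) [Field K] [Algebra (MvPolynomial ℕ ℚ) K]
    [IsFractionRing (MvPolynomial ℕ ℚ) K]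
    (τ : ℕ → (K →+* K))
    (hτ : ∀ i : ℕ, 1 ≤ i → i + 1 ≤ r → ∀ p : MvPolynomial ℕ ℚ,
      τ i (algebraMap (MvPolynomial ℕ ℚ) K p) =
        algebraMap (MvPolynomial ℕ ℚ) K (rename (Equiv.swap i (i + 1)) p))
    (σ : ℕ → K → K)
    (hσ : ∀ i : ℕ, 1 ≤ i → i + 1 ≤ r → ∀ g : K,
      σ i g = τ i g + (g - τ i g) /
        (algebraMap (MvPolynomial ℕ ℚ) K (X i) - algebraMap (MvPolynomial ℕ ℚ) K (X (i + 1))))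
    (W : ℕ → K)
    (hW0 : W 0 = (algebraMap (MvPolynomial ℕ ℚ) K (X 0) -
      algebraMap (MvPolynomial ℕ ℚ) K (X 1))⁻¹)
    (hW : ∀ j : ℕ, 1 ≤ j → j ≤ r - 1 → W j = σ j (W (j - 1))) :
    1 + ∑ j ∈ Finset.range r, W j =
      ∏ i ∈ Finset.Icc 1 r,
        (algebraMap (MvPolynomial ℕ ℚ) K (X 0) + 1 - algebraMap (MvPolynomial ℕ ℚ) K (X i)) /
          (algebraMap (MvPolynomial ℕ ℚ) K (X 0) - algebraMap (MvPolynomial ℕ ℚ) K (X i)) := by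
  have inj : Function.Injective (algebraMap (MvPolynomial ℕ ℚ) K) :=
    IsFractionRing.injective _ _
  set f : ℕ → K := fun i => algebraMap (MvPolynomial ℕ ℚ) K (X i) with hf
  have fne : ∀ i k : ℕ, i ≠ k → f i - f k ≠ 0 := by
    intro i k h
    rw [sub_ne_zero]
    exact fun he => h (MvPolynomial.X_injective (inj he))
  set P : ℕ → K := fun m => ∏ i ∈ Finset.Icc 1 m, (f 0 + 1 - f i) / (f 0 - f i) with hP
  -- τ on generators
  have hτX : ∀ j, 1 ≤ j → j + 1 ≤ r → ∀ i, τ j (f i) = f (Equiv.swap j (j+1) i) := by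
    intro j hj hjr i
    rw [hf]
    simp only [hτ j hj hjr, rename_X]
  have hτfix : ∀ j, 1 ≤ j → j + 1 ≤ r → ∀ i, i ≠ j → i ≠ j + 1 → τ j (f i) = f i := by
    intro j hj hjr i h1 h2
    rw [hτX j hj hjr, Equiv.swap_apply_of_ne_of_ne h1 h2]
  -- τ j fixes P m when m < j
  have hτP : ∀ j, 1 ≤ j → j + 1 ≤ r → ∀ m, m < j → τ j (P m) = P m := by
    intro j hj hjr m hm
    rw [hP, map_prod]
    refine Finset.prod_congr rfl ?_
    intro i hi
    have hi' := Finset.mem_Icc.mp hi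
    have h0 : τ j (f 0) = f 0 := hτfix j hj hjr 0 (by omega) (by omega)
    have hii : τ j (f i) = f i := hτfix j hj hjr i (by omega) (by omega)
    rw [map_div₀, map_sub, map_sub, map_add, map_one, h0, hii]
  -- the key closed formula for W
  have key : ∀ j, j + 1 ≤ r → W j = P j / (f 0 - f (j + 1)) := by
    intro j
    induction j with
    | zero =>
      intro _
      simp [hW0, hP, one_div]
      rfl
    | succ n ih =>
      intro h
      have hn1 : 1 ≤ n + 1 := by omega
      have hWn := ih (by omega)
      rw [hW (n+1) hn1 (by omega), Nat.add_sub_cancel, hσ (n+1) hn1 (by omega)]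
      have hτW : τ (n+1) (W n) = P n / (f 0 - f (n+2)) := by
        rw [hWn, map_div₀, map_sub, hτP (n+1) hn1 h n (by omega),
          hτfix (n+1) hn1 h 0 (by omega) (by omega),
          hτX (n+1) hn1 h, Equiv.swap_apply_left]
      have hPn1 : P (n+1) = P n * ((f 0 + 1 - f (n+1)) / (f 0 - f (n+1))) :=
        Finset.prod_Icc_succ_top (by omega) _
      rw [hτW, hWn, hPn1]
      have h1 : f 0 - f (n+1) ≠ 0 := fne 0 (n+1) (by omega)
      have h2 : f 0 - f (n+2) ≠ 0 := fne 0 (n+2) (by omega)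
      have h3 : f (n+1) - f (n+2) ≠ 0 := fne (n+1) (n+2) (by omega)
      have h3' : algebraMap (MvPolynomial ℕ ℚ) K (X (n+1)) - algebraMap (MvPolynomial ℕ ℚ) K (X (n+1+1)) ≠ 0 := h3
      show P n / (f 0 - f (n+1+1)) + _ = _
      field_simp
      ring
  -- telescoping sum
  have main : ∀ m, m ≤ r → 1 + ∑ j ∈ Finset.range m, W j = P m := by
    intro m
    induction m with
    | zero => intro _; simp [hP]
    | succ n ih =>
      intro h
      rw [Finset.sum_range_succ, ← add_assoc, ih (by omega), key n h]
      have hPn1 : P (n+1) = P n * ((f 0 + 1 - f (n+1)) / (f 0 - f (n+1))) :=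
        Finset.prod_Icc_succ_top (by omega) _
      rw [hPn1]
      have h1 : f 0 - f (n+1) ≠ 0 := fne 0 (n+1) (by omega)
      field_simp
      ring
  exact main r le_rfl
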